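/- arXiv:1112.4411 — 2 statements merged into one kernel-verified Lean document; each statement's English description precedes it below -/
import Mathlib

section
/- For integers $n \geq m > r \geq 0$, the following product identity holds: $\prod_{i=0}^{m-r-1}\frac{i!\,(n+i)!}{(m-1-i)!\,(n-r+i)!} = \prod_{i=0}^{m-r-1}\frac{\binom{n+m-r-1}{r+i}}{\binom{n+m-r-1}{i}}$. -/
open Finset

theorem degree_product_identity (n m r : ℕ) (hrm : r < m) (hmn : m ≤ n) :
    ∏ i ∈ range (m - r), ((i.factorial * (n + i).factorial : ℚ) /
        ((m - 1 - i).factorial * (n - r + i).factorial)) =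
    ∏ i ∈ range (m - r), (((n + m - r - 1).choose (r + i) : ℚ) /
        ((n + m - r - 1).choose i)) := by
  set k := m - r with hk
  set N := n + m - r - 1 with hN
  have hfac : ∀ a : ℕ, (a.factorial : ℚ) ≠ 0 := fun a =>
    Nat.cast_ne_zero.mpr (Nat.factorial_ne_zero a)
  have hterm : ∀ i ∈ range k, ((N.choose (r + i) : ℚ) / (N.choose i)) =
      ((i.factorial : ℚ) * ((N - i).factorial)) /
        (((r + i).factorial) * ((N - (r + i)).factorial)) := by
    intro i hi
    simp only [mem_range] at hi
    rw [Nat.cast_choose ℚ (show r + i ≤ N by omega),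
        Nat.cast_choose ℚ (show i ≤ N by omega)]
    rw [div_div_div_eq]
    rw [mul_comm ((N.factorial : ℚ)) _, mul_div_mul_right _ _ (hfac N)]
  rw [Finset.prod_congr rfl hterm]
  rw [Finset.prod_div_distrib, Finset.prod_div_distrib,
      Finset.prod_mul_distrib, Finset.prod_mul_distrib,
      Finset.prod_mul_distrib, Finset.prod_mul_distrib]
  have E1 : ∏ i ∈ range k, (((n + i).factorial : ℚ)) =
      ∏ i ∈ range k, (((N - i).factorial : ℚ)) := by
    rw [← Finset.prod_range_reflect (fun i => ((N - i).factorial : ℚ)) k]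
    refine Finset.prod_congr rfl fun i hi => ?_
    simp only [mem_range] at hi
    have : N - (k - 1 - i) = n + i := by omega
    rw [this]
  have E2 : ∏ i ∈ range k, (((m - 1 - i).factorial : ℚ)) =
      ∏ i ∈ range k, (((r + i).factorial : ℚ)) := by
    rw [← Finset.prod_range_reflect (fun i => (((r + i)).factorial : ℚ)) k]
    refine Finset.prod_congr rfl fun i hi => ?_
    simp only [mem_range] at hi
    have : r + (k - 1 - i) = m - 1 - i := by omega
    rw [this]
  have E3 : ∏ i ∈ range k, (((n - r + i).factorial : ℚ)) =
      ∏ i ∈ range k, (((N - (r + i)).factorial : ℚ)) := by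
    rw [← Finset.prod_range_reflect (fun i => ((N - (r + i)).factorial : ℚ)) k]
    refine Finset.prod_congr rfl fun i hi => ?_
    simp only [mem_range] at hi
    have : N - (r + (k - 1 - i)) = n - r + i := by omega
    rw [this]
  rw [E1, E2, E3]
end

section
/- Let $D \geq 1$ and let $S(t) = \sum_{i \geq 0} a_i t^i$ be a formal power series with integer coefficients such that $a_0 > 0$. Then $\left[(1-t^D)\,[S(t)]_+\right]_+ = \left[(1-t^D)\,S(t)\right]_+$, where $[\cdot]_+$ denotes truncation of a power series at (just before) its first non-positive coefficient. -/
/-- Truncation of a power series (given by its coefficient sequence) at its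
first non-positive coefficient: coefficients before the first index `i₀` with
`a i₀ ≤ 0` are kept, all others are set to `0`. -/
noncomputable def truncPlus (a : ℕ → ℤ) : ℕ → ℤ :=
  fun i => if ∀ j ≤ i, 0 < a j then a i else 0

/-- Coefficient sequence of `(1 - t^D) * S(t)` where `S` has coefficients `a`:
the coefficient of `t^i` is `a i - a (i - D)` (with `a` of negative index `0`). -/
def mulOneSubPow (D : ℕ) (a : ℕ → ℤ) : ℕ → ℤ :=
  fun i => a i - (if D ≤ i then a (i - D) else 0)

theorem truncPlus_mulOneSubPow (D : ℕ) (hD : 1 ≤ D) (a : ℕ → ℤ) (ha : 0 < a 0) :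
    truncPlus (mulOneSubPow D (truncPlus a)) = truncPlus (mulOneSubPow D a) := by
  by_cases H : ∀ i, 0 < a i
  · have hb : truncPlus a = a := by
      funext i; exact if_pos fun j _ => H j
    rw [hb]
  · push_neg at H
    set i₀ := Nat.find H with hi₀def
    have hi₀ : a i₀ ≤ 0 := Nat.find_spec H
    have hlt : ∀ j < i₀, 0 < a j := fun j hj => lt_of_not_ge (Nat.find_min H hj)
    set b := truncPlus a with hbdef
    have hb_lt : ∀ i < i₀, b i = a i := by
      intro i hi
      simp only [hbdef, truncPlus]
      rw [if_pos]
      intro j hj; exact hlt j (lt_of_le_of_lt hj hi)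
    have hb_ge : ∀ i, i₀ ≤ i → b i = 0 := by
      intro i hi
      simp only [hbdef, truncPlus]
      rw [if_neg]
      intro h; exact absurd (h i₀ hi) (not_lt.2 hi₀)
    have hfg : ∀ i < i₀, mulOneSubPow D b i = mulOneSubPow D a i := by
      intro i hi
      simp only [mulOneSubPow]
      by_cases hD' : D ≤ i
      · rw [hb_lt i hi, hb_lt (i - D) (lt_of_le_of_lt (Nat.sub_le i D) hi),
          if_pos hD']
      · rw [hb_lt i hi, if_neg hD', if_neg hD']
    have hi₀pos : 0 < i₀ := by
      rcases Nat.eq_zero_or_pos i₀ with h | h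
      · exact absurd (h ▸ hi₀) (not_le.2 ha)
      · exact h
    have hsub : i₀ - D < i₀ := Nat.sub_lt hi₀pos (lt_of_lt_of_le Nat.one_pos hD)
    have hf_i₀ : mulOneSubPow D a i₀ ≤ 0 := by
      simp only [mulOneSubPow]
      by_cases hD' : D ≤ i₀
      · rw [if_pos hD']
        have := hlt _ hsub
        omega
      · rw [if_neg hD']; simpa using hi₀
    have hg_i₀ : mulOneSubPow D b i₀ ≤ 0 := by
      simp only [mulOneSubPow]
      rw [hb_ge i₀ le_rfl]
      by_cases hD' : D ≤ i₀
      · rw [if_pos hD']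
        have h1 : 0 < b (i₀ - D) := by
          rw [hb_lt _ hsub]; exact hlt _ hsub
        omega
      · rw [if_neg hD']; omega
    funext i
    simp only [truncPlus]
    by_cases hg : ∀ j ≤ i, 0 < mulOneSubPow D b j
    · have hii : i < i₀ := by
        by_contra h
        push_neg at h
        exact absurd (hg i₀ h) (not_lt.2 hg_i₀)
      have hf : ∀ j ≤ i, 0 < mulOneSubPow D a j := by
        intro j hj
        rw [← hfg j (lt_of_le_of_lt hj hii)]
        exact hg j hj
      rw [if_pos hg, if_pos hf, hfg i hii]
    · have hf : ¬ ∀ j ≤ i, 0 < mulOneSubPow D a j := by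
        intro hf
        have hii : i < i₀ := by
          by_contra h
          push_neg at h
          exact absurd (hf i₀ h) (not_lt.2 hf_i₀)
        exact hg fun j hj => (hfg j (lt_of_le_of_lt hj hii)) ▸ hf j hj
      rw [if_neg hg, if_neg hf]
end
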